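/- The iterated partial-sum operators L^k turn log-concavity into strict log-concavity: let k ≥ 1 be a natural number and p : ℕ → ℝ with p(n) > 0 for all n and p log-concave on [0,∞) (p(n)² ≥ p(n−1)·p(n+1) for all n ≥ 1). Define (L^k p)(n) := ∑_{j=0}^{n} C(n−j+k−1, n−j)·p(j), where C denotes the binomial coefficient. Then f := L^k p is strictly log-concave: f(n)² > f(n−1)·f(n+1) for all n ≥ 1. -/

import Mathlib

open Finset

private def Lk (k : ℕ) (p : ℕ → ℝ) (n : ℕ) : ℝ :=
  ∑ j ∈ Finset.range (n + 1), ((n - j + k - 1).choose (n - j) : ℝ) * p j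

private lemma ratio_lemma (a : ℕ → ℝ) (hpos : ∀ n, 0 < a n)
    (hlc : ∀ n, a n * a (n+2) ≤ a (n+1)^2) :
    ∀ i l, i ≤ l → a i * a (l+1) ≤ a (i+1) * a l := by
  intro i l hil
  induction l with
  | zero =>
    interval_cases i
    exact le_of_eq (mul_comm _ _)
  | succ l ih =>
    rcases Nat.lt_or_ge i (l+1) with h | h
    · have h1 := ih (Nat.lt_succ_iff.mp h)
      have h2 := hlc l
      have hp := hpos l
      have hp1 := hpos (l+1)
      nlinarith [mul_le_mul h1 h2 (mul_nonneg hp.le (hpos (l+2)).le)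
        (mul_nonneg (hpos (i+1)).le hp.le), mul_pos hp hp1, hpos i, hpos (i+1), hpos (l+2)]
    · have : i = l + 1 := le_antisymm hil h
      subst this
      exact le_of_eq (mul_comm _ _)

private lemma partial_sum_pos (a : ℕ → ℝ) (hpos : ∀ n, 0 < a n) (n : ℕ) :
    0 < ∑ j ∈ Finset.range (n+1), a j :=
  Finset.sum_pos (fun j _ => hpos j) nonempty_range_add_one

private lemma partial_sum_slc (a : ℕ → ℝ) (hpos : ∀ n, 0 < a n)
    (hlc : ∀ n, a n * a (n+2) ≤ a (n+1)^2) (m : ℕ) :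
    (∑ j ∈ Finset.range (m+1), a j) * (∑ j ∈ Finset.range (m+3), a j)
      < (∑ j ∈ Finset.range (m+2), a j)^2 := by
  set F : ℕ → ℝ := fun n => ∑ j ∈ Finset.range (n+1), a j with hF
  have h2 : F (m+2) = F (m+1) + a (m+2) := Finset.sum_range_succ a (m+2)
  have h1 : F (m+1) = F m + a (m+1) := Finset.sum_range_succ a (m+1)
  have key : F m * a (m+2) < F (m+1) * a (m+1) := by
    have e1 : F (m+1) * a (m+1)
        = (∑ j ∈ Finset.range (m+1), a (j+1) * a (m+1)) + a 0 * a (m+1) := by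
      simp only [hF, Finset.sum_mul]
      exact Finset.sum_range_succ' (fun j => a j * a (m+1)) (m+1)
    have e2 : F m * a (m+2) = ∑ j ∈ Finset.range (m+1), a j * a (m+2) := by
      simp only [hF, Finset.sum_mul]
    have hterm : ∀ j ∈ Finset.range (m+1), a j * a (m+2) ≤ a (j+1) * a (m+1) := by
      intro j hj
      exact ratio_lemma a hpos hlc j (m+1) (by simp at hj; omega)
    have hsum := Finset.sum_le_sum hterm
    have h0 : 0 < a 0 * a (m+1) := mul_pos (hpos 0) (hpos (m+1))
    linarith
  show F m * F (m+2) < F (m+1)^2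
  nlinarith [partial_sum_pos a hpos m, hpos (m+1)]

private lemma Lk_one (p : ℕ → ℝ) (n : ℕ) :
    Lk 1 p n = ∑ j ∈ Finset.range (n+1), p j := by
  simp [Lk]

private lemma Lk_succ (k : ℕ) (p : ℕ → ℝ) (n : ℕ) :
    Lk (k+2) p n = ∑ m ∈ Finset.range (n+1), Lk (k+1) p m := by
  induction n with
  | zero => simp [Lk]
  | succ n ih =>
    rw [Finset.sum_range_succ, ← ih]
    have e1 : ∀ x : ℕ, x + (k+2) - 1 = x + (k+1) := fun x => by omega
    have e2 : ∀ x : ℕ, x + (k+1) - 1 = x + k := fun x => by omega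
    simp only [Lk, e1, e2]
    rw [Finset.sum_range_succ, Finset.sum_range_succ
      (fun j => ((n + 1 - j + k).choose (n + 1 - j) : ℝ) * p j)]
    have hlast1 : ((n + 1 - (n+1) + (k+1)).choose (n + 1 - (n+1)) : ℝ) * p (n+1) = p (n+1) := by
      simp
    have hlast2 : ((n + 1 - (n+1) + k).choose (n + 1 - (n+1)) : ℝ) * p (n+1) = p (n+1) := by
      simp
    rw [hlast1, hlast2]
    have hmain : (∑ j ∈ Finset.range (n+1), ((n + 1 - j + (k+1)).choose (n + 1 - j) : ℝ) * p j)
        = (∑ j ∈ Finset.range (n+1), ((n - j + (k+1)).choose (n - j) : ℝ) * p j)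
          + ∑ j ∈ Finset.range (n+1), ((n + 1 - j + k).choose (n + 1 - j) : ℝ) * p j := by
      rw [← Finset.sum_add_distrib]
      apply Finset.sum_congr rfl
      intro j hj
      have hjn : j ≤ n := by simp at hj; omega
      have hd : n + 1 - j = (n - j) + 1 := by omega
      rw [hd]
      have : (n - j + 1 + (k+1)).choose (n - j + 1)
          = (n - j + (k+1)).choose (n - j) + (n - j + (k+1)).choose (n - j + 1) := by
        have := Nat.choose_succ_succ (n - j + (k+1)) (n - j)
        have harg : n - j + 1 + (k+1) = (n - j + (k+1)) + 1 := by omega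
        rw [harg, this]
      rw [this]
      have harg2 : n - j + 1 + k = n - j + (k + 1) := by omega
      rw [harg2]
      push_cast
      ring
    linarith

private lemma Lk_main (k : ℕ) (p : ℕ → ℝ) (hpos : ∀ n, 0 < p n)
    (hlc : ∀ n, p n * p (n+2) ≤ p (n+1)^2) :
    (∀ n, 0 < Lk (k+1) p n) ∧
    (∀ m, Lk (k+1) p m * Lk (k+1) p (m+2) < Lk (k+1) p (m+1)^2) := by
  induction k with
  | zero =>
    constructor
    · intro n; rw [Lk_one]; exact partial_sum_pos p hpos n
    · intro m
      rw [Lk_one, Lk_one, Lk_one]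
      exact partial_sum_slc p hpos hlc m
  | succ k ih =>
    obtain ⟨ihpos, ihslc⟩ := ih
    have ihlc : ∀ n, Lk (k+1) p n * Lk (k+1) p (n+2) ≤ Lk (k+1) p (n+1)^2 :=
      fun n => (ihslc n).le
    constructor
    · intro n
      rw [Lk_succ]
      exact partial_sum_pos _ ihpos n
    · intro m
      rw [Lk_succ, Lk_succ, Lk_succ]
      exact partial_sum_slc _ ihpos ihlc m

/-- The iterated partial-sum operators L^k turn log-concavity into strict
log-concavity: (L^k p)(n) := ∑_{j=0}^n C(n-j+k-1, n-j)·p(j). -/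
theorem Lk_strictly_log_concave
    (k : ℕ) (hk : 1 ≤ k) (p : ℕ → ℝ)
    (hpos : ∀ n : ℕ, 0 < p n)
    (hlc : ∀ n : ℕ, 1 ≤ n → p (n - 1) * p (n + 1) ≤ p n ^ 2)
    (f : ℕ → ℝ)
    (hf : ∀ n : ℕ, f n = ∑ j ∈ Finset.range (n + 1),
      ((n - j + k - 1).choose (n - j) : ℝ) * p j) :
    ∀ n : ℕ, 1 ≤ n → f (n - 1) * f (n + 1) < f n ^ 2 := by
  obtain ⟨K, rfl⟩ : ∃ K, k = K + 1 := ⟨k - 1, by omega⟩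
  have hlc' : ∀ n, p n * p (n+2) ≤ p (n+1)^2 := by
    intro n
    have := hlc (n+1) (by omega)
    simpa using this
  have hfeq : ∀ n, f n = Lk (K+1) p n := fun n => hf n
  intro n hn
  obtain ⟨m, rfl⟩ : ∃ m, n = m + 1 := ⟨n - 1, by omega⟩
  have := (Lk_main K p hpos hlc').2 m
  simp only [hfeq]
  simpa using this
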